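/- Let v₁ = (x, 1−2x−y), v₂ = (0, −1+4x), v₃ = (−x, y), v₄ = (1−4y, 0), v₅ = (−1+x+2y, −y) be the basis of RT₁⁰, and write v_i = (v_i^x, v_i^y). Let the six nodes be X₁ = (1/2, 0), X₂ = (1, 0), X₃ = (1/2, 1/2), X₄ = (0, 1), X₅ = (0, 1/2), X₆ = (0, 0), with X_j = (x_j, y_j). Define F_{ji} = ∫₀^{x_j} v_i^x(s, 0) ds + ∫₀^{y_j} v_i^y(x_j, t) dt for 1 ≤ j ≤ 6 and 1 ≤ i ≤ 5. Then the 6×6 matrix whose (j,i) entry is F_{ji} for i ≤ 5 and whose sixth column consists entirely of ones is singular (its determinant is zero). -/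

import Mathlib

open MeasureTheory intervalIntegral

/-- First components of the basis fields `v₁ = (x, 1−2x−y)`, `v₂ = (0, −1+4x)`,
`v₃ = (−x, y)`, `v₄ = (1−4y, 0)`, `v₅ = (−1+x+2y, −y)` of `RT₁⁰`. -/
noncomputable def rt1vx : Fin 5 → ℝ → ℝ → ℝ :=
  ![fun x _ => x, fun _ _ => 0, fun x _ => -x, fun _ y => 1 - 4 * y, fun x y => -1 + x + 2 * y]

/-- Second components of the basis fields of `RT₁⁰`. -/
noncomputable def rt1vy : Fin 5 → ℝ → ℝ → ℝ :=
  ![fun x y => 1 - 2 * x - y, fun x _ => -1 + 4 * x, fun _ y => y, fun _ _ => 0, fun _ y => -y]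

/-- The six nodes `X₁ = (1/2,0)`, `X₂ = (1,0)`, `X₃ = (1/2,1/2)`, `X₄ = (0,1)`,
`X₅ = (0,1/2)`, `X₆ = (0,0)`. -/
noncomputable def rt1Nodes : Fin 6 → ℝ × ℝ :=
  ![(1/2, 0), (1, 0), (1/2, 1/2), (0, 1), (0, 1/2), (0, 0)]

/-- `F_{ji} = ∫₀^{x_j} v_i^x(s,0) ds + ∫₀^{y_j} v_i^y(x_j,t) dt`, the integral along the
two-section path `(0,0) → (x_j,0) → (x_j,y_j)` (potential `φ = 0`, `D = 1`). -/
noncomputable def rt1F (j : Fin 6) (i : Fin 5) : ℝ :=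
  (∫ s in (0:ℝ)..(rt1Nodes j).1, rt1vx i s 0) +
    ∫ t in (0:ℝ)..(rt1Nodes j).2, rt1vy i (rt1Nodes j).1 t


lemma lin_int (c d a : ℝ) : ∫ t in (0:ℝ)..a, (c + d * t) = c * a + d * a ^ 2 / 2 := by
  have h : ∀ t ∈ Set.uIcc (0:ℝ) a, HasDerivAt (fun t => c * t + d * t ^ 2 / 2) (c + d * t) t := by
    intro t _
    have := ((hasDerivAt_id t).const_mul c).add (((hasDerivAt_pow 2 t).const_mul d).div_const 2)
    convert this using 1
    · rfl
    · rfl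
    · funext t; simp
    push_cast; ring
  rw [intervalIntegral.integral_eq_sub_of_hasDerivAt h
    (((continuous_const.add (continuous_const.mul continuous_id)).intervalIntegrable 0 a))]
  ring

lemma Lid (a : ℝ) : ∫ s in (0:ℝ)..a, s = a ^ 2 / 2 := by
  have := lin_int 0 1 a; simp at this; simpa using this

lemma Lneg (a : ℝ) : ∫ s in (0:ℝ)..a, -s = -(a ^ 2 / 2) := by
  have h : (fun s : ℝ => -s) = fun s : ℝ => (0:ℝ) + (-1) * s := by funext s; ring
  rw [h, lin_int]; ring

lemma L4x (a : ℝ) : ∫ _s in (0:ℝ)..a, ((1:ℝ) - 4 * 0) = a := by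
  simp

lemma L5x (a : ℝ) : ∫ s in (0:ℝ)..a, (-1 + s + 2 * 0) = -a + a ^ 2 / 2 := by
  have h : (fun s : ℝ => -1 + s + 2 * 0) = fun s : ℝ => (-1:ℝ) + 1 * s := by funext s; ring
  rw [h, lin_int]; ring

/-- The integrals of `v₃`, `v₄`, `v₅` along the two-section paths sum to zero. -/
lemma rt1F_sum (j : Fin 6) : rt1F j 2 + rt1F j 3 + rt1F j 4 = 0 := by
  simp only [rt1F, rt1vx, rt1vy, Matrix.cons_val_zero, Matrix.cons_val_one, Matrix.head_cons,
    Matrix.cons_val_two, Matrix.tail_cons, Matrix.cons_val_three, Matrix.cons_val_four,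
    Lid, Lneg, L4x, L5x, intervalIntegral.integral_const, smul_eq_mul]
  ring

/-- The 6×6 matrix whose `(j,i)` entry is `F_{ji}` for `i ≤ 5` and whose sixth column is
all ones is singular: its determinant is zero. -/
theorem rt1_interpolation_matrix_singular :
    Matrix.det (Matrix.of fun j i : Fin 6 =>
      if h : (i : ℕ) < 5 then rt1F j ⟨(i : ℕ), h⟩ else 1) = 0 := by
  rw [← Matrix.exists_mulVec_eq_zero_iff]
  refine ⟨![0, 0, 1, 1, 1, 0], ?_, ?_⟩
  · intro h
    have := congrFun h 2
    simp at this
  · funext j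
    simp only [Matrix.mulVec, dotProduct, Fin.sum_univ_six, Matrix.of_apply,
      Matrix.cons_val_zero, Matrix.cons_val_one, Matrix.head_cons, Matrix.cons_val_two,
      Matrix.tail_cons, Matrix.cons_val_three, Matrix.cons_val_four, Matrix.cons_val_fin_one,
      Pi.zero_apply]
    rw [dif_pos (by decide), dif_pos (by decide), dif_pos (by decide), dif_pos (by decide),
      dif_pos (by decide), dif_neg (by decide)]
    show rt1F j 0 * 0 + rt1F j 1 * 0 + rt1F j 2 * 1 + rt1F j 3 * 1 + rt1F j 4 * 1 + 1 * 0 = 0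
    linarith [rt1F_sum j]
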